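/- For the inversion-even molecular SSH breather φ = (1/√2)(1,1) with ω = -m + g/2, the nonzero eigenvalues of the on-site stability block B₀ are ±i√(2m(2m+g)); hence this breather is linearly stable at the molecular limit if and only if g ≥ -2m. -/
import Mathlib


open Matrix Polynomial

set_option maxHeartbeats 1000000 in
theorem det_fin_four'' {R : Type*} [CommRing R] (M : Matrix (Fin 4) (Fin 4) R) :
    M.det =
      M 0 0 * (M 1 1 * (M 2 2 * M 3 3 - M 2 3 * M 3 2) - M 1 2 * (M 2 1 * M 3 3 - M 2 3 * M 3 1) + M 1 3 * (M 2 1 * M 3 2 - M 2 2 * M 3 1))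
    - M 0 1 * (M 1 0 * (M 2 2 * M 3 3 - M 2 3 * M 3 2) - M 1 2 * (M 2 0 * M 3 3 - M 2 3 * M 3 0) + M 1 3 * (M 2 0 * M 3 2 - M 2 2 * M 3 0))
    + M 0 2 * (M 1 0 * (M 2 1 * M 3 3 - M 2 3 * M 3 1) - M 1 1 * (M 2 0 * M 3 3 - M 2 3 * M 3 0) + M 1 3 * (M 2 0 * M 3 1 - M 2 1 * M 3 0))
    - M 0 3 * (M 1 0 * (M 2 1 * M 3 2 - M 2 2 * M 3 1) - M 1 1 * (M 2 0 * M 3 2 - M 2 2 * M 3 0) + M 1 2 * (M 2 0 * M 3 1 - M 2 1 * M 3 0)) := by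
  simp [Matrix.det_succ_row_zero, Fin.sum_univ_succ, Fin.succAbove, Matrix.submatrix,
    show (Fin.succ 2:Fin 4)=3 from rfl, show (Fin.castSucc 2:Fin 4)=2 from rfl,
    show ((1:Fin 4) < 3) from by decide]
  ring

set_option maxHeartbeats 1000000 in
theorem charpoly_my' (a b : ℂ) :
    (Matrix.charpoly !![0,0,-a,b; 0,0,b,-a; b,-b,0,0; -b,b,0,0] : ℂ[X])
      = X ^ 2 * (X ^ 2 + C (2*b*(a+b))) := by
  rw [Matrix.charpoly, det_fin_four'']
  simp [charmatrix_apply, Matrix.one_apply, _root_.map_mul, map_sub, map_neg, map_ofNat,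
    Matrix.vecHead, Matrix.vecTail]
  ring

/-- Stability block B₀ of the inversion-even molecular SSH breather
    φ = (1,1)/√2, ω = -m + g/2: nonzero eigenvalues are ±i√(2m(2m+g));
    B₀ has an eigenvalue with positive real part iff g < -2m. -/
theorem stmt_7 (m g : ℝ) (hm : 0 < m)
    (h : Matrix (Fin 2) (Fin 2) ℝ) (hh : h = !![0, -m; -m, 0])
    (ω : ℝ) (hω : ω = -m + g / 2)
    (Lm Lp : Matrix (Fin 2) (Fin 2) ℝ)
    (hLm : Lm = h - ω • (1 : Matrix (Fin 2) (Fin 2) ℝ)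
        + g • Matrix.diagonal (fun _ => (1 : ℝ) / 2))
    (hLp : Lp = h - ω • (1 : Matrix (Fin 2) (Fin 2) ℝ)
        + (3 * g) • Matrix.diagonal (fun _ => (1 : ℝ) / 2))
    (B0 : Matrix (Fin 2 ⊕ Fin 2) (Fin 2 ⊕ Fin 2) ℂ)
    (hB0 : B0 = (Matrix.fromBlocks 0 (-Lp) Lm 0).map (algebraMap ℝ ℂ)) :
    B0.charpoly = X ^ 2 * (X ^ 2 + C (((2 * m * (2 * m + g) : ℝ) : ℂ))) ∧
    (0 ≤ 2 * m * (2 * m + g) →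
      ∀ lam : ℂ, B0.charpoly.IsRoot lam →
        lam = 0 ∨ lam = Complex.I * Real.sqrt (2 * m * (2 * m + g)) ∨
          lam = -(Complex.I * Real.sqrt (2 * m * (2 * m + g)))) ∧
    ((∃ lam : ℂ, B0.charpoly.IsRoot lam ∧ 0 < lam.re) ↔ g < -2 * m) := by
  have hLm' : Lm = !![m, -m; -m, m] := by
    subst hLm hh hω; ext i j; fin_cases i <;> fin_cases j <;>
      simp [Matrix.one_apply, Matrix.diagonal] <;> ring
  have hLp' : Lp = !![m + g, -m; -m, m + g] := by
    subst hLp hh hω; ext i j; fin_cases i <;> fin_cases j <;>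
      simp [Matrix.one_apply, Matrix.diagonal] <;> ring
  -- reindex to Fin 4
  have e0 : (finSumFinEquiv.symm (0:Fin 4) : Fin 2 ⊕ Fin 2) = Sum.inl 0 := by decide
  have e1 : (finSumFinEquiv.symm (1:Fin 4) : Fin 2 ⊕ Fin 2) = Sum.inl 1 := by decide
  have e2 : (finSumFinEquiv.symm (2:Fin 4) : Fin 2 ⊕ Fin 2) = Sum.inr 0 := by decide
  have e3 : (finSumFinEquiv.symm (3:Fin 4) : Fin 2 ⊕ Fin 2) = Sum.inr 1 := by decide
  have hre : Matrix.reindex (finSumFinEquiv : Fin 2 ⊕ Fin 2 ≃ Fin 4) finSumFinEquiv B0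
      = !![0,0,-((m+g:ℝ):ℂ),(m:ℝ); 0,0,(m:ℝ),-((m+g:ℝ):ℂ);
           (m:ℝ),-(m:ℝ),0,0; -(m:ℝ),(m:ℝ),0,0] := by
    subst hB0 hLm' hLp'
    ext i j
    fin_cases i <;> fin_cases j <;>
      simp [e0, e1, e2, e3, Matrix.fromBlocks, Matrix.vecHead, Matrix.vecTail]
  have hconst : (2 * ((m:ℝ):ℂ) * (((m+g:ℝ):ℂ) + ((m:ℝ):ℂ)))
      = ((2 * m * (2 * m + g) : ℝ) : ℂ) := by push_cast; ring
  have hcp : B0.charpoly = X ^ 2 * (X ^ 2 + C (((2 * m * (2 * m + g) : ℝ) : ℂ))) := by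
    rw [← Matrix.charpoly_reindex (finSumFinEquiv : Fin 2 ⊕ Fin 2 ≃ Fin 4) B0, hre,
      charpoly_my', hconst]
  set c : ℝ := 2 * m * (2 * m + g) with hc
  have key : ∀ lam : ℂ, B0.charpoly.IsRoot lam ↔ (lam = 0 ∨ lam ^ 2 = -(c:ℂ)) := by
    intro lam
    rw [hcp]
    simp only [IsRoot, eval_mul, eval_add, eval_pow, eval_X, eval_C, mul_eq_zero,
      pow_eq_zero_iff (n := 2) (by norm_num)]
    constructor
    · rintro (h | h)
      · exact Or.inl h
      · exact Or.inr (by linear_combination h)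
    · rintro (h | h)
      · exact Or.inl h
      · exact Or.inr (by rw [h]; ring)
  refine ⟨hcp, ?_, ?_⟩
  · intro hcnn lam hroot
    rcases (key lam).mp hroot with h0 | h2
    · exact Or.inl h0
    · right
      have hw : (Complex.I * (Real.sqrt c : ℂ)) ^ 2 = -(c:ℂ) := by
        rw [mul_pow, Complex.I_sq]
        have : ((Real.sqrt c : ℝ) : ℂ) ^ 2 = ((Real.sqrt c ^ 2 : ℝ) : ℂ) := by push_cast; ring
        rw [this, Real.sq_sqrt hcnn]; ring
      have : (lam - Complex.I * (Real.sqrt c : ℂ)) * (lam + Complex.I * (Real.sqrt c : ℂ)) = 0 := by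
        have := h2.trans hw.symm
        linear_combination this
      rcases mul_eq_zero.mp this with h | h
      · exact Or.inl (by linear_combination h)
      · exact Or.inr (by linear_combination h)
  · constructor
    · rintro ⟨lam, hroot, hpos⟩
      by_contra hg
      push_neg at hg
      have hcnn : 0 ≤ c := by
        have : 0 ≤ 2 * m + g := by linarith
        have : 0 ≤ 2 * m := by linarith
        nlinarith
      rcases (key lam).mp hroot with h0 | h2
      · rw [h0] at hpos; simp at hpos
      · -- lam = ± I √c, both have re = 0
        have hw : (Complex.I * (Real.sqrt c : ℂ)) ^ 2 = -(c:ℂ) := by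
          rw [mul_pow, Complex.I_sq]
          have : ((Real.sqrt c : ℝ) : ℂ) ^ 2 = ((Real.sqrt c ^ 2 : ℝ) : ℂ) := by push_cast; ring
          rw [this, Real.sq_sqrt hcnn]; ring
        have : (lam - Complex.I * (Real.sqrt c : ℂ)) * (lam + Complex.I * (Real.sqrt c : ℂ)) = 0 := by
          linear_combination h2.trans hw.symm
        rcases mul_eq_zero.mp this with h | h
        · have hl : lam = Complex.I * (Real.sqrt c : ℂ) := by linear_combination h
          rw [hl] at hpos
          simp [Complex.mul_re] at hpos
        · have hl : lam = -(Complex.I * (Real.sqrt c : ℂ)) := by linear_combination h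
          rw [hl] at hpos
          simp [Complex.mul_re] at hpos
    · intro hg
      have hcneg : c < 0 := by
        have h1 : 2 * m + g < 0 := by linarith
        have h2 : 0 < 2 * m := by linarith
        nlinarith
      refine ⟨(Real.sqrt (-c) : ℂ), ?_, ?_⟩
      · apply (key _).mpr
        right
        have : ((Real.sqrt (-c) : ℝ) : ℂ) ^ 2 = ((Real.sqrt (-c) ^ 2 : ℝ) : ℂ) := by push_cast; ring
        rw [this, Real.sq_sqrt (by linarith)]
        push_cast; ring
      · simp only [Complex.ofReal_re]
        exact Real.sqrt_pos.mpr (by linarith)
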